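/- If G₁ ≡ᵇᶠ_α H₁ and G₂ ≡ᵇᶠ_α H₂ as groups, then the free products satisfy G₁ * G₂ ≡ᵇᶠ_α H₁ * H₂. -/

import Mathlib

/-- Tuples `g` and `h` satisfy the same group-word equations (equal quantifier-free types). -/
def WordEq {ι : Type*} (G H : Type*) [Group G] [Group H]
    (g : ι → G) (h : ι → H) : Prop :=
  ∀ w : FreeGroup ι, FreeGroup.lift g w = 1 ↔ FreeGroup.lift h w = 1

/-- The standard symmetric back-and-forth relation of rank `α` between groups with
distinguished tuples. -/
def GBF (G H : Type*) [Group G] [Group H]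
    (α : Ordinal) (n : ℕ) (g : Fin n → G) (h : Fin n → H) : Prop :=
  (α = 0 ∧ WordEq G H g h) ∨
  (α ≠ 0 ∧
    (∀ β < α, ∀ (m : ℕ) (c : Fin m → G), ∃ d : Fin m → H,
      GBF G H β (n + m) (Fin.append g c) (Fin.append h d)) ∧
    (∀ β < α, ∀ (m : ℕ) (d : Fin m → H), ∃ c : Fin m → G,
      GBF G H β (n + m) (Fin.append g c) (Fin.append h d)))
termination_by α

open Monoid

namespace GBFAux

variable {ι : Type*} {A G : ι → Type*} [∀ i, Group (A i)] [∀ i, Group (G i)]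

/-- The letterwise image of a reduced word under injective homs. -/
def mapWord (f : ∀ i, A i →* G i) (hf : ∀ i, Function.Injective (f i))
    (w : CoprodI.Word A) : CoprodI.Word G where
  toList := w.toList.map fun l => ⟨l.1, f l.1 l.2⟩
  ne_one := by
    intro l hl
    simp only [List.mem_map] at hl
    obtain ⟨l', hl', rfl⟩ := hl
    exact fun h => w.ne_one l' hl' ((injective_iff_map_eq_one (f l'.1)).mp (hf l'.1) _ h)
  chain_ne := by
    have := w.chain_ne
    rw [List.isChain_map]
    exact this.imp fun a b h => h

theorem prod_mapWord (f : ∀ i, A i →* G i) (hf : ∀ i, Function.Injective (f i))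
    (w : CoprodI.Word A) :
    (mapWord f hf w).prod =
      CoprodI.lift (fun i => CoprodI.of.comp (f i)) w.prod := by
  rw [CoprodI.Word.prod, CoprodI.Word.prod, map_list_prod]
  simp only [mapWord, List.map_map]
  congr 1

theorem lift_of_comp_injective (f : ∀ i, A i →* G i) (hf : ∀ i, Function.Injective (f i)) :
    Function.Injective (CoprodI.lift (fun i => (CoprodI.of : G i →* _).comp (f i))) := by
  classical
  rw [injective_iff_map_eq_one]
  intro x hx
  by_contra hne
  set w := CoprodI.Word.equiv x with hw
  have hxw : CoprodI.Word.prod w = x := CoprodI.Word.equiv.left_inv x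
  have h1 : (mapWord f hf w).prod = 1 := by rw [prod_mapWord, hxw, hx]
  have hwne : w ≠ CoprodI.Word.empty := by
    intro h
    apply hne
    rw [← hxw, h, CoprodI.Word.prod_empty]
  have hne2 : mapWord f hf w ≠ CoprodI.Word.empty := by
    intro h
    apply hwne
    have h2 : w.toList = [] := by
      have := congrArg CoprodI.Word.toList h
      simpa [mapWord, CoprodI.Word.empty] using this
    exact CoprodI.Word.ext h2
  apply hne2
  apply CoprodI.Word.equiv.symm.injective (a₁ := mapWord f hf w) (a₂ := CoprodI.Word.empty)
  show CoprodI.Word.prod _ = CoprodI.Word.prod _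
  rw [h1, CoprodI.Word.prod_empty]

end GBFAux

namespace GBFAux

universe u v

/-- The `Bool`-indexed family corresponding to a pair of groups. -/
def Fam (G₁ : Type u) (G₂ : Type v) : Bool → Type (max u v) :=
  fun b => Bool.rec (ULift G₂) (ULift G₁) b

instance famGroup (G₁ : Type u) (G₂ : Type v) [Group G₁] [Group G₂] :
    ∀ b, Group (Fam G₁ G₂ b) := fun b => by
  cases b
  · exact (inferInstance : Group (ULift G₂))
  · exact (inferInstance : Group (ULift G₁))

variable (G₁ : Type u) (G₂ : Type v) [Group G₁] [Group G₂]

/-- The canonical hom from the binary coproduct to the indexed coproduct. -/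
def toCoprodI : Coprod G₁ G₂ →* CoprodI (Fam G₁ G₂) :=
  Coprod.lift
    ((CoprodI.of (i := true)).comp (MulEquiv.ulift.symm.toMonoidHom))
    ((CoprodI.of (i := false)).comp (MulEquiv.ulift.symm.toMonoidHom))

/-- A hom back from the indexed coproduct. -/
def ofCoprodI : CoprodI (Fam G₁ G₂) →* Coprod G₁ G₂ :=
  CoprodI.lift (fun b => match b with
    | true => Coprod.inl.comp (MulEquiv.ulift.toMonoidHom)
    | false => Coprod.inr.comp (MulEquiv.ulift.toMonoidHom))

theorem ofCoprodI_comp_toCoprodI :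
    (ofCoprodI G₁ G₂).comp (toCoprodI G₁ G₂) = MonoidHom.id _ := by
  apply Coprod.hom_ext <;> ext x <;> rfl

theorem toCoprodI_injective : Function.Injective (toCoprodI G₁ G₂) :=
  Function.LeftInverse.injective
    (fun x => DFunLike.congr_fun (ofCoprodI_comp_toCoprodI G₁ G₂) x)

end GBFAux

namespace GBFAux

variable {ι₁ ι₂ : Type}

/-- The `Bool`-indexed family of quotients of free groups. -/
def QFam (K₁ : Subgroup (FreeGroup ι₁)) [K₁.Normal] (K₂ : Subgroup (FreeGroup ι₂)) [K₂.Normal] :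
    Bool → Type :=
  fun b => Bool.rec (FreeGroup ι₂ ⧸ K₂) (FreeGroup ι₁ ⧸ K₁) b

instance qFamGroup (K₁ : Subgroup (FreeGroup ι₁)) [K₁.Normal] (K₂ : Subgroup (FreeGroup ι₂))
    [K₂.Normal] : ∀ b, Group (QFam K₁ K₂ b) := fun b => by
  cases b
  · exact (inferInstance : Group (FreeGroup ι₂ ⧸ K₂))
  · exact (inferInstance : Group (FreeGroup ι₁ ⧸ K₁))

/-- The "pattern" homomorphism depending only on the kernels. -/
def patt (K₁ : Subgroup (FreeGroup ι₁)) [K₁.Normal] (K₂ : Subgroup (FreeGroup ι₂)) [K₂.Normal] :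
    FreeGroup (ι₁ ⊕ ι₂) →* CoprodI (QFam K₁ K₂) :=
  FreeGroup.lift (Sum.elim
    (fun i => CoprodI.of (M := QFam K₁ K₂) (i := true)
      (QuotientGroup.mk (FreeGroup.of i) : FreeGroup ι₁ ⧸ K₁))
    (fun i => CoprodI.of (M := QFam K₁ K₂) (i := false)
      (QuotientGroup.mk (FreeGroup.of i) : FreeGroup ι₂ ⧸ K₂)))

variable {G₁ : Type u} {G₂ : Type v} [Group G₁] [Group G₂]

/-- The family of quotient-lifted homs into `Fam G₁ G₂`. -/
def qhom {K₁ : Subgroup (FreeGroup ι₁)} [K₁.Normal] {K₂ : Subgroup (FreeGroup ι₂)} [K₂.Normal]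
    (f₁ : FreeGroup ι₁ →* G₁) (f₂ : FreeGroup ι₂ →* G₂)
    (hf₁ : ∀ x ∈ K₁, f₁ x = 1) (hf₂ : ∀ x ∈ K₂, f₂ x = 1) :
    ∀ b, QFam K₁ K₂ b →* Fam G₁ G₂ b := fun b =>
  match b with
  | true => (MulEquiv.ulift.symm.toMonoidHom).comp (QuotientGroup.lift K₁ f₁ hf₁)
  | false => (MulEquiv.ulift.symm.toMonoidHom).comp (QuotientGroup.lift K₂ f₂ hf₂)

theorem qhom_injective {K₁ : Subgroup (FreeGroup ι₁)} [K₁.Normal] {K₂ : Subgroup (FreeGroup ι₂)}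
    [K₂.Normal] (f₁ : FreeGroup ι₁ →* G₁) (f₂ : FreeGroup ι₂ →* G₂)
    (hf₁ : ∀ x ∈ K₁, f₁ x = 1) (hf₂ : ∀ x ∈ K₂, f₂ x = 1)
    (hk₁ : ∀ x, f₁ x = 1 → x ∈ K₁) (hk₂ : ∀ x, f₂ x = 1 → x ∈ K₂) :
    ∀ b, Function.Injective (qhom f₁ f₂ hf₁ hf₂ b) := by
  have l1 : Function.Injective (QuotientGroup.lift K₁ f₁ hf₁) := by
    rw [injective_iff_map_eq_one]
    intro q hq
    induction q using QuotientGroup.induction_on with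
    | H x =>
      change f₁ x = 1 at hq
      exact (QuotientGroup.eq_one_iff x).mpr (hk₁ x hq)
  have l2 : Function.Injective (QuotientGroup.lift K₂ f₂ hf₂) := by
    rw [injective_iff_map_eq_one]
    intro q hq
    induction q using QuotientGroup.induction_on with
    | H x =>
      change f₂ x = 1 at hq
      exact (QuotientGroup.eq_one_iff x).mpr (hk₂ x hq)
  intro b
  cases b
  · exact MulEquiv.ulift.symm.injective.comp l2
  · exact MulEquiv.ulift.symm.injective.comp l1

/-- Evaluation of a mixed word at a pair of tuples in the two factors. -/
def mix (g₁ : ι₁ → G₁) (g₂ : ι₂ → G₂) : FreeGroup (ι₁ ⊕ ι₂) →* Coprod G₁ G₂ :=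
  FreeGroup.lift (Sum.elim (fun i => Coprod.inl (g₁ i)) (fun i => Coprod.inr (g₂ i)))

theorem mix_factor {K₁ : Subgroup (FreeGroup ι₁)} [K₁.Normal] {K₂ : Subgroup (FreeGroup ι₂)}
    [K₂.Normal] (g₁ : ι₁ → G₁) (g₂ : ι₂ → G₂)
    (hf₁ : ∀ x ∈ K₁, FreeGroup.lift g₁ x = 1) (hf₂ : ∀ x ∈ K₂, FreeGroup.lift g₂ x = 1) :
    (toCoprodI G₁ G₂).comp (mix g₁ g₂) =
      (CoprodI.lift (fun b => (CoprodI.of : Fam G₁ G₂ b →* _).comp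
        (qhom (FreeGroup.lift g₁) (FreeGroup.lift g₂) hf₁ hf₂ b))).comp (patt K₁ K₂) := by
  apply FreeGroup.ext_hom
  intro a
  rcases a with i | i <;>
    · simp only [mix, patt, toCoprodI, MonoidHom.comp_apply, FreeGroup.lift_apply_of, Sum.elim_inl,
        Sum.elim_inr, Coprod.lift_apply_inl, Coprod.lift_apply_inr, CoprodI.lift_of, qhom]
      congr 1
      erw [CoprodI.lift_of]
      exact congrArg _ (congrArg _ FreeGroup.lift_apply_of.symm)

theorem mix_eq_one {H₁ H₂ : Type*} [Group H₁] [Group H₂]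
    {g₁ : ι₁ → G₁} {h₁ : ι₁ → H₁} {g₂ : ι₂ → G₂} {h₂ : ι₂ → H₂}
    (e₁ : WordEq G₁ H₁ g₁ h₁) (e₂ : WordEq G₂ H₂ g₂ h₂) (u : FreeGroup (ι₁ ⊕ ι₂)) :
    mix g₁ g₂ u = 1 ↔ mix h₁ h₂ u = 1 := by
  set K₁ := (FreeGroup.lift g₁).ker with hK₁
  set K₂ := (FreeGroup.lift g₂).ker with hK₂
  have hfG₁ : ∀ x ∈ K₁, FreeGroup.lift g₁ x = 1 := fun x hx => hx
  have hfG₂ : ∀ x ∈ K₂, FreeGroup.lift g₂ x = 1 := fun x hx => hx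
  have hfH₁ : ∀ x ∈ K₁, FreeGroup.lift h₁ x = 1 := fun x hx => (e₁ x).mp hx
  have hfH₂ : ∀ x ∈ K₂, FreeGroup.lift h₂ x = 1 := fun x hx => (e₂ x).mp hx
  have hG := mix_factor (K₁ := K₁) (K₂ := K₂) g₁ g₂ hfG₁ hfG₂
  have hH := mix_factor (K₁ := K₁) (K₂ := K₂) h₁ h₂ hfH₁ hfH₂
  have hjGinj := lift_of_comp_injective _
    (qhom_injective (FreeGroup.lift g₁) (FreeGroup.lift g₂) hfG₁ hfG₂
      (fun x hx => hx) (fun x hx => hx))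
  have hjHinj := lift_of_comp_injective _
    (qhom_injective (FreeGroup.lift h₁) (FreeGroup.lift h₂) hfH₁ hfH₂
      (fun x hx => (e₁ x).mpr hx) (fun x hx => (e₂ x).mpr hx))
  have hGiff : mix g₁ g₂ u = 1 ↔ patt K₁ K₂ u = 1 := by
    rw [← map_eq_one_iff _ (toCoprodI_injective G₁ G₂), ← map_eq_one_iff _ hjGinj]
    exact Iff.of_eq (congrArg (· = 1) (DFunLike.congr_fun hG u))
  have hHiff : mix h₁ h₂ u = 1 ↔ patt K₁ K₂ u = 1 := by
    rw [← map_eq_one_iff _ (toCoprodI_injective H₁ H₂), ← map_eq_one_iff _ hjHinj]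
    exact Iff.of_eq (congrArg (· = 1) (DFunLike.congr_fun hH u))
  rw [hGiff, hHiff]

end GBFAux



namespace GBFAux

theorem freeGroup_lift_map {α β : Type*} {G : Type*} [Group G] (φ : α → β) (f : β → G)
    (w : FreeGroup α) :
    FreeGroup.lift f (FreeGroup.map φ w) = FreeGroup.lift (fun a => f (φ a)) w := by
  have h : (FreeGroup.lift f).comp (FreeGroup.map φ) = FreeGroup.lift (fun a => f (φ a)) :=
    FreeGroup.ext_hom _ _ (by simp [FreeGroup.map.of, FreeGroup.lift_apply_of])
  exact DFunLike.congr_fun h w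

theorem freeGroup_lift_hom {α ι : Type*} {P : Type*} [Group P] (F : FreeGroup ι →* P)
    (w : α → FreeGroup ι) (v : FreeGroup α) :
    FreeGroup.lift (fun j => F (w j)) v = F (FreeGroup.lift w v) := by
  have h : (FreeGroup.lift (fun j => F (w j)) : FreeGroup α →* P) =
      F.comp (FreeGroup.lift w) :=
    FreeGroup.ext_hom _ _ (by simp [FreeGroup.lift_apply_of])
  exact DFunLike.congr_fun h v

variable {G₁ : Type u} {G₂ : Type v} [Group G₁] [Group G₂]

theorem mix_map_castAdd {n₁ n₂ k₁ k₂ : ℕ} (g₁ : Fin n₁ → G₁) (g₂ : Fin n₂ → G₂)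
    (a : Fin k₁ → G₁) (b : Fin k₂ → G₂) (u : FreeGroup (Fin n₁ ⊕ Fin n₂)) :
    mix (Fin.append g₁ a) (Fin.append g₂ b)
      (FreeGroup.map (Sum.map (Fin.castAdd k₁) (Fin.castAdd k₂)) u) = mix g₁ g₂ u := by
  rw [mix, mix, freeGroup_lift_map]
  have h : (fun x => Sum.elim (fun i => Coprod.inl (Fin.append g₁ a i))
      (fun i => Coprod.inr (Fin.append g₂ b i)) (Sum.map (Fin.castAdd k₁) (Fin.castAdd k₂) x)) =
      (Sum.elim (fun i => (Coprod.inl (g₁ i) : Coprod G₁ G₂)) (fun i => Coprod.inr (g₂ i))) := by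
    funext x
    rcases x with i | i <;> simp [Fin.append_left]
  rw [h]

theorem mix_map_natAdd {n₁ n₂ k₁ k₂ : ℕ} (g₁ : Fin n₁ → G₁) (g₂ : Fin n₂ → G₂)
    (a : Fin k₁ → G₁) (b : Fin k₂ → G₂) (u : FreeGroup (Fin k₁ ⊕ Fin k₂)) :
    mix (Fin.append g₁ a) (Fin.append g₂ b)
      (FreeGroup.map (Sum.map (Fin.natAdd n₁) (Fin.natAdd n₂)) u) = mix a b u := by
  rw [mix, mix, freeGroup_lift_map]
  have h : (fun x => Sum.elim (fun i => Coprod.inl (Fin.append g₁ a i))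
      (fun i => Coprod.inr (Fin.append g₂ b i)) (Sum.map (Fin.natAdd n₁) (Fin.natAdd n₂) x)) =
      (Sum.elim (fun i => (Coprod.inl (a i) : Coprod G₁ G₂)) (fun i => Coprod.inr (b i))) := by
    funext x
    rcases x with i | i <;> simp [Fin.append_right]
  rw [h]

theorem exists_word (x : Coprod G₁ G₂) :
    ∃ (k₁ k₂ : ℕ) (a : Fin k₁ → G₁) (b : Fin k₂ → G₂) (u : FreeGroup (Fin k₁ ⊕ Fin k₂)),
      x = mix a b u := by
  induction x using Coprod.induction_on with
  | inl x =>
    refine ⟨1, 0, fun _ => x, fun i => i.elim0, FreeGroup.of (Sum.inl 0), ?_⟩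
    simp [mix, FreeGroup.lift_apply_of]
  | inr x =>
    refine ⟨0, 1, fun i => i.elim0, fun _ => x, FreeGroup.of (Sum.inr 0), ?_⟩
    simp [mix, FreeGroup.lift_apply_of]
  | mul x y hx hy =>
    obtain ⟨k₁, k₂, a, b, u, rfl⟩ := hx
    obtain ⟨k₁', k₂', a', b', u', rfl⟩ := hy
    refine ⟨k₁ + k₁', k₂ + k₂', Fin.append a a', Fin.append b b',
      FreeGroup.map (Sum.map (Fin.castAdd k₁') (Fin.castAdd k₂')) u *
        FreeGroup.map (Sum.map (Fin.natAdd k₁) (Fin.natAdd k₂)) u', ?_⟩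
    rw [map_mul, mix_map_castAdd, mix_map_natAdd]

theorem exists_words {m : ℕ} (c : Fin m → Coprod G₁ G₂) :
    ∃ (k₁ k₂ : ℕ) (a : Fin k₁ → G₁) (b : Fin k₂ → G₂)
      (u : Fin m → FreeGroup (Fin k₁ ⊕ Fin k₂)), ∀ j, c j = mix a b (u j) := by
  induction m with
  | zero => exact ⟨0, 0, fun i => i.elim0, fun i => i.elim0, fun j => j.elim0,
      fun j => j.elim0⟩
  | succ m IH =>
    obtain ⟨k₁, k₂, a, b, u, hu⟩ := IH (fun j => c j.succ)
    obtain ⟨k₁', k₂', a', b', u₀, h₀⟩ := exists_word (c 0)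
    refine ⟨k₁' + k₁, k₂' + k₂, Fin.append a' a, Fin.append b' b,
      Fin.cons (FreeGroup.map (Sum.map (Fin.castAdd k₁) (Fin.castAdd k₂)) u₀)
        (fun j => FreeGroup.map (Sum.map (Fin.natAdd k₁') (Fin.natAdd k₂')) (u j)), ?_⟩
    intro j
    refine Fin.cases ?_ ?_ j
    · rw [Fin.cons_zero, mix_map_castAdd, ← h₀]
    · intro jj
      rw [Fin.cons_succ, mix_map_natAdd, ← hu]

end GBFAux

namespace GBFAux

variable {G₁ : Type u} {G₂ : Type v} [Group G₁] [Group G₂]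
variable {H₁ H₂ : Type*} [Group H₁] [Group H₂]

theorem gbf_mix : ∀ (α : Ordinal) {n₁ n₂ : ℕ} (g₁ : Fin n₁ → G₁) (h₁ : Fin n₁ → H₁)
    (g₂ : Fin n₂ → G₂) (h₂ : Fin n₂ → H₂),
    GBF G₁ H₁ α n₁ g₁ h₁ → GBF G₂ H₂ α n₂ g₂ h₂ →
    ∀ (m : ℕ) (w : Fin m → FreeGroup (Fin n₁ ⊕ Fin n₂)),
    GBF (Coprod G₁ G₂) (Coprod H₁ H₂) α m
      (fun j => mix g₁ g₂ (w j)) (fun j => mix h₁ h₂ (w j)) := by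
  intro α
  induction α using Ordinal.induction with
  | h α IH =>
    intro n₁ n₂ g₁ h₁ g₂ h₂ B1 B2 m w
    rcases eq_or_ne α 0 with rfl | hα
    · rw [GBF.eq_def]
      rw [GBF.eq_def] at B1 B2
      refine Or.inl ⟨rfl, ?_⟩
      rcases B1 with ⟨-, e₁⟩ | ⟨hne, -⟩; swap
      · exact absurd rfl hne
      rcases B2 with ⟨-, e₂⟩ | ⟨hne, -⟩; swap
      · exact absurd rfl hne
      intro v
      rw [freeGroup_lift_hom (mix g₁ g₂) w v, freeGroup_lift_hom (mix h₁ h₂) w v]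
      exact mix_eq_one e₁ e₂ _
    · rw [GBF.eq_def] at B1 B2
      rcases B1 with ⟨h0, -⟩ | ⟨-, f₁, bk₁⟩
      · exact absurd h0 hα
      rcases B2 with ⟨h0, -⟩ | ⟨-, f₂, bk₂⟩
      · exact absurd h0 hα
      rw [GBF.eq_def]
      refine Or.inr ⟨hα, ?_, ?_⟩
      · -- forth
        intro β hβ m' c
        obtain ⟨k₁, k₂, a, b, u, hu⟩ := exists_words c
        obtain ⟨a', ha⟩ := f₁ β hβ k₁ a
        obtain ⟨b', hb⟩ := f₂ β hβ k₂ b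
        have key := IH β hβ (Fin.append g₁ a) (Fin.append h₁ a') (Fin.append g₂ b)
          (Fin.append h₂ b') ha hb (m + m')
          (Fin.append (fun j => FreeGroup.map (Sum.map (Fin.castAdd k₁) (Fin.castAdd k₂)) (w j))
            (fun j => FreeGroup.map (Sum.map (Fin.natAdd n₁) (Fin.natAdd n₂)) (u j)))
        refine ⟨fun j => mix (Fin.append h₁ a') (Fin.append h₂ b')
          (FreeGroup.map (Sum.map (Fin.natAdd n₁) (Fin.natAdd n₂)) (u j)), ?_⟩
        have e1 : Fin.append (fun j => mix g₁ g₂ (w j)) c =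
            fun j => mix (Fin.append g₁ a) (Fin.append g₂ b)
              (Fin.append
                (fun j => FreeGroup.map (Sum.map (Fin.castAdd k₁) (Fin.castAdd k₂)) (w j))
                (fun j => FreeGroup.map (Sum.map (Fin.natAdd n₁) (Fin.natAdd n₂)) (u j)) j) := by
          funext j
          refine Fin.addCases ?_ ?_ j <;> intro jj <;>
            simp [Fin.append_left, Fin.append_right, mix_map_castAdd, mix_map_natAdd, hu]
        have e2 : Fin.append (fun j => mix h₁ h₂ (w j))
            (fun j => mix (Fin.append h₁ a') (Fin.append h₂ b')
              (FreeGroup.map (Sum.map (Fin.natAdd n₁) (Fin.natAdd n₂)) (u j))) =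
            fun j => mix (Fin.append h₁ a') (Fin.append h₂ b')
              (Fin.append
                (fun j => FreeGroup.map (Sum.map (Fin.castAdd k₁) (Fin.castAdd k₂)) (w j))
                (fun j => FreeGroup.map (Sum.map (Fin.natAdd n₁) (Fin.natAdd n₂)) (u j)) j) := by
          funext j
          refine Fin.addCases ?_ ?_ j <;> intro jj <;>
            simp [Fin.append_left, Fin.append_right, mix_map_castAdd, mix_map_natAdd]
        rw [e1, e2]
        exact key
      · -- back
        intro β hβ m' d
        obtain ⟨k₁, k₂, a', b', u, hu⟩ := exists_words d
        obtain ⟨a, ha⟩ := bk₁ β hβ k₁ a'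
        obtain ⟨b, hb⟩ := bk₂ β hβ k₂ b'
        have key := IH β hβ (Fin.append g₁ a) (Fin.append h₁ a') (Fin.append g₂ b)
          (Fin.append h₂ b') ha hb (m + m')
          (Fin.append (fun j => FreeGroup.map (Sum.map (Fin.castAdd k₁) (Fin.castAdd k₂)) (w j))
            (fun j => FreeGroup.map (Sum.map (Fin.natAdd n₁) (Fin.natAdd n₂)) (u j)))
        refine ⟨fun j => mix (Fin.append g₁ a) (Fin.append g₂ b)
          (FreeGroup.map (Sum.map (Fin.natAdd n₁) (Fin.natAdd n₂)) (u j)), ?_⟩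
        have e1 : Fin.append (fun j => mix g₁ g₂ (w j))
            (fun j => mix (Fin.append g₁ a) (Fin.append g₂ b)
              (FreeGroup.map (Sum.map (Fin.natAdd n₁) (Fin.natAdd n₂)) (u j))) =
            fun j => mix (Fin.append g₁ a) (Fin.append g₂ b)
              (Fin.append
                (fun j => FreeGroup.map (Sum.map (Fin.castAdd k₁) (Fin.castAdd k₂)) (w j))
                (fun j => FreeGroup.map (Sum.map (Fin.natAdd n₁) (Fin.natAdd n₂)) (u j)) j) := by
          funext j
          refine Fin.addCases ?_ ?_ j <;> intro jj <;>
            simp [Fin.append_left, Fin.append_right, mix_map_castAdd, mix_map_natAdd]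
        have e2 : Fin.append (fun j => mix h₁ h₂ (w j)) d =
            fun j => mix (Fin.append h₁ a') (Fin.append h₂ b')
              (Fin.append
                (fun j => FreeGroup.map (Sum.map (Fin.castAdd k₁) (Fin.castAdd k₂)) (w j))
                (fun j => FreeGroup.map (Sum.map (Fin.natAdd n₁) (Fin.natAdd n₂)) (u j)) j) := by
          funext j
          refine Fin.addCases ?_ ?_ j <;> intro jj <;>
            simp [Fin.append_left, Fin.append_right, mix_map_castAdd, mix_map_natAdd, hu]
        rw [e1, e2]
        exact key

end GBFAux

/-- Back-and-forth equivalence is preserved by free products of groups. -/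
theorem gbf_coprod {G₁ G₂ H₁ H₂ : Type*} [Group G₁] [Group G₂] [Group H₁] [Group H₂]
    {α : Ordinal}
    (h₁ : GBF G₁ H₁ α 0 (fun i => i.elim0) (fun i => i.elim0))
    (h₂ : GBF G₂ H₂ α 0 (fun i => i.elim0) (fun i => i.elim0)) :
    GBF (Monoid.Coprod G₁ G₂) (Monoid.Coprod H₁ H₂) α 0
      (fun i => i.elim0) (fun i => i.elim0) := by
  have key := GBFAux.gbf_mix α (fun i : Fin 0 => i.elim0) (fun i : Fin 0 => i.elim0)
    (fun i : Fin 0 => i.elim0) (fun i : Fin 0 => i.elim0) h₁ h₂ 0 (fun i => i.elim0)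
  have e1 : (fun i : Fin 0 => (i.elim0 : Monoid.Coprod G₁ G₂)) =
      fun j : Fin 0 => GBFAux.mix (fun i : Fin 0 => i.elim0) (fun i : Fin 0 => i.elim0)
        ((fun i : Fin 0 => i.elim0) j) := funext fun j => j.elim0
  have e2 : (fun i : Fin 0 => (i.elim0 : Monoid.Coprod H₁ H₂)) =
      fun j : Fin 0 => GBFAux.mix (fun i : Fin 0 => i.elim0) (fun i : Fin 0 => i.elim0)
        ((fun i : Fin 0 => i.elim0) j) := funext fun j => j.elim0
  rw [e1, e2]
  exact key
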